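/- Let m ≥ 1, let j_1,...,j_m be positive integers and k_1,...,k_m be positive integers with ∑_{s=1}^m k_s · j_s = n. Then ∑_{s=1}^m (k_s - 1 + log₂ j_s) + m - 1 ≥ log₂ n. -/

import Mathlib

/-- Let `m ≥ 1`, `j_1,...,j_m` and `k_1,...,k_m` positive integers with `∑ k_s * j_s = n`.
Then `∑ (k_s - 1 + log₂ j_s) + m - 1 ≥ log₂ n`, with `log₂` the real base-2 logarithm. -/
theorem sum_conn_ge_logb (m : ℕ) (hm : 1 ≤ m) (j k : Fin m → ℕ) (n : ℕ) (hn : 0 < n)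
    (hj : ∀ s, 0 < j s) (hk : ∀ s, 0 < k s)
    (hsum : ∑ s, k s * j s = n) :
    (∑ s, ((k s : ℝ) - 1 + Real.logb 2 (j s))) + m - 1 ≥ Real.logb 2 n := by
  have key : ∀ r : ℕ, 1 ≤ r → r ≤ 2 ^ (r - 1) := by
    intro r hr
    calc r = (r - 1) + 1 := (Nat.succ_pred_eq_of_pos hr).symm
    _ ≤ 2 ^ (r - 1) := Nat.lt_two_pow_self
  set a : Fin m → ℕ := fun s => 2 ^ (k s - 1) * j s with ha
  have ha1 : ∀ s, 1 ≤ a s := fun s => Nat.mul_pos (Nat.two_pow_pos _) (hj s)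
  have hP : 0 < ∏ s, a s := Finset.prod_pos (fun s _ => ha1 s)
  have hnle : n ≤ 2 ^ (m - 1) * ∏ s, a s := by
    calc n = ∑ s, k s * j s := hsum.symm
    _ ≤ ∑ _s : Fin m, ∏ t, a t := Finset.sum_le_sum (fun s _ => by
        calc k s * j s ≤ a s := Nat.mul_le_mul_right _ (key _ (hk s))
        _ ≤ ∏ t, a t := Finset.single_le_prod' (fun t _ => ha1 t) (Finset.mem_univ s))
    _ = m * ∏ s, a s := by simp [Finset.sum_const, Finset.card_univ]
    _ ≤ 2 ^ (m - 1) * ∏ s, a s := Nat.mul_le_mul_right _ (key m hm)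
  have hlog : Real.logb 2 n ≤ Real.logb 2 ((2 ^ (m - 1) * ∏ s, a s : ℕ)) := by
    apply Real.logb_le_logb_of_le (by norm_num) (by exact_mod_cast hn)
    exact_mod_cast hnle
  have hai : ∀ s : Fin m, Real.logb 2 ((a s : ℕ) : ℝ) = (k s : ℝ) - 1 + Real.logb 2 (j s) := by
    intro s
    have hc : ((a s : ℕ) : ℝ) = 2 ^ (k s - 1) * (j s : ℝ) := by simp only [ha]; push_cast; ring
    rw [hc, Real.logb_mul (by positivity) (by exact_mod_cast (hj s).ne'),
      Real.logb_pow, Real.logb_self_eq_one (by norm_num), mul_one,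
      Nat.cast_sub (hk s), Nat.cast_one]
  have hrhs : Real.logb 2 ((2 ^ (m - 1) * ∏ s, a s : ℕ))
      = ((m : ℝ) - 1) + ∑ s, ((k s : ℝ) - 1 + Real.logb 2 (j s)) := by
    have hcast : ((2 ^ (m - 1) * ∏ s, a s : ℕ) : ℝ) = 2 ^ (m - 1) * ∏ s, ((a s : ℕ) : ℝ) := by
      push_cast; ring
    rw [hcast, Real.logb_mul (by positivity) (by exact_mod_cast hP.ne'),
      Real.logb_pow, Real.logb_self_eq_one (by norm_num), mul_one,
      Real.logb_prod _ _ (fun s _ => by exact_mod_cast (Nat.cast_pos.mpr (ha1 s)).ne'),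
      Finset.sum_congr rfl (fun s _ => hai s), Nat.cast_sub hm, Nat.cast_one]
  rw [hrhs] at hlog
  linarith
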